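/- arXiv:2511.00882 — 5 statements merged into one kernel-verified Lean document; each statement's English description precedes it below -/
import Mathlib

section
/- For every integer k with 2 ≤ k ≤ r, the following recursion holds in W: ϖ_k = ϖ_{k-1} · (r_{k-1} r_{k-2} ⋯ r_2 r_1) · ϖ_1 · (r_1 r_2 ⋯ r_{k-1}), where ϖ_1 = r_0 r_1 ⋯ r_{r-1} r_r r_{r-1} ⋯ r_1. -/
noncomputable section

open CoxeterSystem
open Fin.NatCast

/-- The Coxeter matrix of the affine Weyl group of type `Ã_{2r}`:
vertices `0, …, 2r` arranged in a cycle mod `N = 2r+1`; `m i j = 3` if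
`i - j ≡ ±1 (mod N)`, `m i j = 2` for other off-diagonal pairs. -/
def affACoxeterMatrix (r : ℕ) : CoxeterMatrix (Fin (2 * r + 1)) where
  M i j := if i = j then 1 else if i = j + 1 ∨ j = i + 1 then 3 else 2
  isSymm := by
    apply Matrix.IsSymm.ext
    intro i j
    by_cases h : j = i
    · subst h; rfl
    · rw [if_neg h, if_neg (fun hh : i = j => h hh.symm)]
      exact if_congr or_comm rfl rfl
  diagonal i := if_pos rfl
  off_diagonal i j h := by
    rw [if_neg h]
    split <;> omega

/-- The affine Weyl group `W` of type `Ã_{2r}`, as the Coxeter group of the above matrix. -/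
abbrev AffW (r : ℕ) : Type := (affACoxeterMatrix r).Group

/-- The canonical Coxeter system on `AffW r`. -/
def affCS (r : ℕ) : CoxeterSystem (affACoxeterMatrix r) (AffW r) :=
  (affACoxeterMatrix r).toCoxeterSystem

/-- The simple reflection `s i` (index taken mod `2r+1`). -/
def sgen (r i : ℕ) : AffW r := (affCS r).simple ((i : ℕ) : Fin (2 * r + 1))

/-- The word in the simple reflections representing the generator `r_i` of the
relative Weyl group: `r_0 = s_0`, `r_i = s_i s_{2r+1-i}` for `1 ≤ i ≤ r-1`,
`r_r = s_r s_{r+1} s_r`. -/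
def rword (r : ℕ) : ℕ → List (Fin (2 * r + 1)) := fun i =>
  if i = 0 then [(0 : Fin (2 * r + 1))]
  else if i < r then [((i : ℕ) : Fin (2 * r + 1)), ((2 * r + 1 - i : ℕ) : Fin (2 * r + 1))]
  else [((r : ℕ) : Fin (2 * r + 1)), ((r + 1 : ℕ) : Fin (2 * r + 1)), ((r : ℕ) : Fin (2 * r + 1))]

/-- The element `r_i` of `W`. -/
def rgen (r i : ℕ) : AffW r := (affCS r).wordProd (rword r i)

/-- The list `[a, a+1, …, b]` (empty if `b < a`). -/
def ascSeq (a b : ℕ) : List ℕ := List.range' a (b + 1 - a)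

/-- The list `[b, b-1, …, a]` (empty if `b < a`). -/
def descSeq (a b : ℕ) : List ℕ := (List.range' a (b + 1 - a)).reverse

/-- The expansion, as a word in the simple reflections, of the block
`r_0 r_1 ⋯ r_{r-1} r_r r_{r-1} ⋯ r_k`. -/
def blockWord (r k : ℕ) : List (Fin (2 * r + 1)) :=
  ((ascSeq 0 r ++ descSeq k (r - 1)).map (rword r)).flatten

/-- The element `r_0 r_1 ⋯ r_{r-1} r_r r_{r-1} ⋯ r_k` of `W`. -/
def blockEl (r k : ℕ) : AffW r := (affCS r).wordProd (blockWord r k)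

/-- The expansion, as a word in the simple reflections, of
`ϖ_k = (r_0 r_1 ⋯ r_{r-1} r_r r_{r-1} ⋯ r_k)^k`. -/
def piWord (r k : ℕ) : List (Fin (2 * r + 1)) :=
  (List.replicate k (blockWord r k)).flatten

/-- The element `ϖ_k = (r_0 r_1 ⋯ r_{r-1} r_r r_{r-1} ⋯ r_k)^k` of `W`. -/
def piEl (r k : ℕ) : AffW r := (affCS r).wordProd (piWord r k)

/-- The expansion of the full block `r_0 r_1 ⋯ r_{r-1} r_r` as a word. -/
def fullBlockWord (r : ℕ) : List (Fin (2 * r + 1)) :=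
  ((ascSeq 0 r).map (rword r)).flatten

/-- The element `r_0 r_1 ⋯ r_{r-1} r_r` of `W`. -/
def fullBlockEl (r : ℕ) : AffW r := (affCS r).wordProd (fullBlockWord r)


section Aux

open List

variable {r : ℕ}

/-! ### Fin arithmetic helpers -/

lemma coe_eq_coe {a b : ℕ} (ha : a < 2*r+1) (hb : b < 2*r+1) :
    ((a : Fin (2*r+1)) = (b : Fin (2*r+1))) ↔ a = b := by
  rw [Fin.ext_iff, Fin.val_natCast, Fin.val_natCast, Nat.mod_eq_of_lt ha, Nat.mod_eq_of_lt hb]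

lemma coe_eq_succ {a b : ℕ} (ha : a < 2*r+1) (hb : b < 2*r+1) :
    ((a : Fin (2*r+1)) = (b : Fin (2*r+1)) + 1) ↔ (a = b+1 ∨ (b = 2*r ∧ a = 0)) := by
  have h : (b : Fin (2*r+1)) + 1 = ((b+1 : ℕ) : Fin (2*r+1)) := by push_cast; ring
  rw [h, Fin.ext_iff, Fin.val_natCast, Fin.val_natCast, Nat.mod_eq_of_lt ha]
  rcases Nat.lt_or_ge (b+1) (2*r+1) with hlt | hge
  · rw [Nat.mod_eq_of_lt hlt]; omega
  · have hb2 : b = 2*r := by omega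
    subst hb2
    rw [Nat.mod_self]
    omega

lemma M_eq_two {a b : ℕ} (ha : a ≤ 2*r) (hb : b ≤ 2*r)
    (h : ¬(a = b ∨ a = b+1 ∨ b = a+1 ∨ (b = 2*r ∧ a = 0) ∨ (a = 2*r ∧ b = 0))) :
    (affACoxeterMatrix r).M a b = 2 := by
  have ha' : a < 2*r+1 := by omega
  have hb' : b < 2*r+1 := by omega
  show (if (a : Fin (2*r+1)) = b then 1
    else if (a : Fin (2*r+1)) = (b : Fin (2*r+1)) + 1 ∨ (b : Fin (2*r+1)) = (a : Fin (2*r+1)) + 1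
      then 3 else 2) = 2
  rw [if_neg (by rw [coe_eq_coe ha' hb']; omega),
    if_neg (by rw [coe_eq_succ ha' hb', coe_eq_succ hb' ha']; omega)]

lemma M_eq_three (hr : 1 ≤ r) {a b : ℕ} (ha : a ≤ 2*r) (hb : b ≤ 2*r)
    (h : a = b+1 ∨ b = a+1 ∨ (b = 2*r ∧ a = 0) ∨ (a = 2*r ∧ b = 0)) :
    (affACoxeterMatrix r).M a b = 3 := by
  have ha' : a < 2*r+1 := by omega
  have hb' : b < 2*r+1 := by omega
  show (if (a : Fin (2*r+1)) = b then 1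
    else if (a : Fin (2*r+1)) = (b : Fin (2*r+1)) + 1 ∨ (b : Fin (2*r+1)) = (a : Fin (2*r+1)) + 1
      then 3 else 2) = 3
  rw [if_neg (by rw [coe_eq_coe ha' hb']; omega),
    if_pos (by rw [coe_eq_succ ha' hb', coe_eq_succ hb' ha']; omega)]

/-! ### Simple-reflection relations -/

lemma sgen_sq (a : ℕ) : sgen r a * sgen r a = 1 :=
  (affCS r).simple_mul_simple_self _

lemma sgen_inv (a : ℕ) : (sgen r a)⁻¹ = sgen r a :=
  (affCS r).inv_simple _

lemma sgen_comm' (a b : ℕ)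
    (h : a ≤ 2*r ∧ b ≤ 2*r ∧
      ¬(a = b ∨ a = b+1 ∨ b = a+1 ∨ (b = 2*r ∧ a = 0) ∨ (a = 2*r ∧ b = 0))) :
    Commute (sgen r a) (sgen r b) := by
  obtain ⟨ha, hb, hcond⟩ := h
  have h2 := (affCS r).simple_mul_simple_pow ((a : ℕ) : Fin (2*r+1)) ((b : ℕ) : Fin (2*r+1))
  rw [M_eq_two ha hb hcond] at h2
  have h3 : (sgen r a * sgen r b) * (sgen r a * sgen r b) = 1 := by
    rw [← pow_two]; exact h2
  have h4 : sgen r a * sgen r b = (sgen r a * sgen r b)⁻¹ :=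
    eq_inv_of_mul_eq_one_left h3
  show sgen r a * sgen r b = sgen r b * sgen r a
  rw [h4, mul_inv_rev, sgen_inv, sgen_inv]

lemma sgen_braid' (hr : 1 ≤ r) (a b : ℕ)
    (h : a ≤ 2*r ∧ b ≤ 2*r ∧
      (a = b+1 ∨ b = a+1 ∨ (b = 2*r ∧ a = 0) ∨ (a = 2*r ∧ b = 0))) :
    sgen r a * sgen r b * sgen r a = sgen r b * sgen r a * sgen r b := by
  obtain ⟨ha, hb, hcond⟩ := h
  have h2 := (affCS r).simple_mul_simple_pow ((a : ℕ) : Fin (2*r+1)) ((b : ℕ) : Fin (2*r+1))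
  rw [M_eq_three hr ha hb hcond] at h2
  have h3 : (sgen r a * sgen r b * sgen r a) * (sgen r b * sgen r a * sgen r b) = 1 := by
    rw [show (sgen r a * sgen r b * sgen r a) * (sgen r b * sgen r a * sgen r b)
        = (sgen r a * sgen r b) ^ 3 by rw [pow_succ, pow_succ, pow_one]; group]
    exact h2
  have h4 : sgen r a * sgen r b * sgen r a = (sgen r b * sgen r a * sgen r b)⁻¹ :=
    eq_inv_of_mul_eq_one_left h3
  rw [h4, mul_inv_rev, mul_inv_rev, sgen_inv, sgen_inv, ← mul_assoc]

/-! ### The generators `r_i` -/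

lemma rgen_zero : rgen r 0 = sgen r 0 := by
  unfold rgen rword
  rw [if_pos rfl, CoxeterSystem.wordProd_singleton]
  show _ = (affCS r).simple _
  norm_num

lemma rgen_mid {i : ℕ} (h1 : 1 ≤ i) (h2 : i < r) :
    rgen r i = sgen r i * sgen r (2*r+1-i) := by
  unfold rgen rword
  rw [if_neg (by omega), if_pos h2, CoxeterSystem.wordProd_cons,
    CoxeterSystem.wordProd_singleton]
  rfl

lemma rgen_top (hr : 1 ≤ r) : rgen r r = sgen r r * (sgen r (r+1) * sgen r r) := by
  unfold rgen rword
  rw [if_neg (by omega), if_neg (by omega), CoxeterSystem.wordProd_cons,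
    CoxeterSystem.wordProd_cons, CoxeterSystem.wordProd_singleton]
  rfl

lemma rgen_sq (hr : 1 ≤ r) {i : ℕ} (hi : i ≤ r) : rgen r i * rgen r i = 1 := by
  rcases Nat.eq_zero_or_pos i with rfl | h1
  · rw [rgen_zero]; exact sgen_sq 0
  rcases Nat.lt_or_ge i r with h2 | h2
  · rw [rgen_mid h1 h2]
    have hab : sgen r i * sgen r (2*r+1-i) = sgen r (2*r+1-i) * sgen r i :=
      (sgen_comm' i (2*r+1-i) (by omega)).eq
    rw [show sgen r i * sgen r (2*r+1-i) * (sgen r i * sgen r (2*r+1-i))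
        = sgen r i * (sgen r (2*r+1-i) * sgen r i) * sgen r (2*r+1-i) by group,
      ← hab,
      show sgen r i * (sgen r i * sgen r (2*r+1-i)) * sgen r (2*r+1-i)
        = (sgen r i * sgen r i) * (sgen r (2*r+1-i) * sgen r (2*r+1-i)) by group,
      sgen_sq, sgen_sq, one_mul]
  · have hir : i = r := by omega
    rw [hir, rgen_top hr]
    rw [show sgen r r * (sgen r (r+1) * sgen r r) * (sgen r r * (sgen r (r+1) * sgen r r))
        = sgen r r * sgen r (r+1) * (sgen r r * sgen r r) * sgen r (r+1) * sgen r r by group,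
      sgen_sq, mul_one,
      show sgen r r * sgen r (r+1) * sgen r (r+1) * sgen r r
        = sgen r r * (sgen r (r+1) * sgen r (r+1)) * sgen r r by group,
      sgen_sq, mul_one, sgen_sq]

lemma rgen_comm (hr : 1 ≤ r) {i j : ℕ} (h1 : i + 2 ≤ j) (h2 : j ≤ r) :
    Commute (rgen r i) (rgen r j) := by
  rcases Nat.eq_zero_or_pos i with rfl | hi1
  · rw [rgen_zero]
    rcases Nat.lt_or_ge j r with hj | hj
    · rw [rgen_mid (by omega) hj]
      exact (sgen_comm' 0 j (by omega)).mul_right (sgen_comm' 0 (2*r+1-j) (by omega))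
    · have hjr : j = r := by omega
      rw [hjr, rgen_top hr]
      exact (sgen_comm' 0 r (by omega)).mul_right
        ((sgen_comm' 0 (r+1) (by omega)).mul_right (sgen_comm' 0 r (by omega)))
  · rw [rgen_mid hi1 (by omega)]
    rcases Nat.lt_or_ge j r with hj | hj
    · rw [rgen_mid (by omega) hj]
      exact ((sgen_comm' i j (by omega)).mul_right
          (sgen_comm' i (2*r+1-j) (by omega))).mul_left
        ((sgen_comm' (2*r+1-i) j (by omega)).mul_right
          (sgen_comm' (2*r+1-i) (2*r+1-j) (by omega)))
    · have hjr : j = r := by omega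
      rw [hjr, rgen_top hr]
      exact ((sgen_comm' i r (by omega)).mul_right
          ((sgen_comm' i (r+1) (by omega)).mul_right (sgen_comm' i r (by omega)))).mul_left
        ((sgen_comm' (2*r+1-i) r (by omega)).mul_right
          ((sgen_comm' (2*r+1-i) (r+1) (by omega)).mul_right
            (sgen_comm' (2*r+1-i) r (by omega))))

private lemma sandwich {G : Type*} [Group G] (a b c d : G)
    (hbc : b*c = c*b) (had : a*d = d*a) (hab : a*b = b*a) :
    a*b*(c*d)*(a*b) = (a*c*a)*(b*d*b) := by
  rw [show a*b*(c*d)*(a*b) = a*(b*c)*(d*a)*b by group, hbc, ← had,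
    show a*(c*b)*(a*d)*b = a*c*(b*a)*(d*b) by group, ← hab,
    show a*c*(a*b)*(d*b) = a*c*a*(b*(d*b)) by group, ← mul_assoc b d b]

lemma rgen_braid (hr : 1 ≤ r) {j : ℕ} (h1 : 1 ≤ j) (h2 : j + 2 ≤ r) :
    rgen r j * rgen r (j+1) * rgen r j = rgen r (j+1) * rgen r j * rgen r (j+1) := by
  rw [rgen_mid h1 (by omega), rgen_mid (by omega) (by omega)]
  set a := sgen r j
  set b := sgen r (2*r+1-j)
  set c := sgen r (j+1)
  set d := sgen r (2*r+1-(j+1))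
  have hbc : b*c = c*b := (sgen_comm' (2*r+1-j) (j+1) (by omega)).eq
  have had : a*d = d*a := (sgen_comm' j (2*r+1-(j+1)) (by omega)).eq
  have hab : a*b = b*a := (sgen_comm' j (2*r+1-j) (by omega)).eq
  have hcd : c*d = d*c := (sgen_comm' (j+1) (2*r+1-(j+1)) (by omega)).eq
  have hac : a*c*a = c*a*c := sgen_braid' hr j (j+1) (by omega)
  have hbd : b*d*b = d*b*d := sgen_braid' hr (2*r+1-j) (2*r+1-(j+1)) (by omega)
  calc a*b*(c*d)*(a*b) = (a*c*a)*(b*d*b) := sandwich a b c d hbc had hab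
    _ = (c*a*c)*(d*b*d) := by rw [hac, hbd]
    _ = c*d*(a*b)*(c*d) := (sandwich c d a b had.symm hbc.symm hcd).symm

/-! ### Products of words -/

lemma prod_rwords (r : ℕ) (l : List ℕ) :
    (affCS r).wordProd ((l.map (rword r)).flatten) = (l.map (rgen r)).prod := by
  induction l with
  | nil => simp
  | cons a l ih =>
      rw [List.map_cons, List.flatten_cons, CoxeterSystem.wordProd_append, ih,
        List.map_cons, List.prod_cons]
      rfl

lemma fullBlockEl_eq (r : ℕ) : fullBlockEl r = ((ascSeq 0 r).map (rgen r)).prod := by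
  rw [fullBlockEl, fullBlockWord, prod_rwords]

lemma blockEl_split (r k : ℕ) :
    blockEl r k = fullBlockEl r * ((descSeq k (r-1)).map (rgen r)).prod := by
  rw [blockEl, blockWord, prod_rwords, List.map_append, List.prod_append, fullBlockEl_eq]

lemma piEl_eq (r k : ℕ) : piEl r k = blockEl r k ^ k := by
  rw [piEl, piWord, blockEl]
  generalize blockWord r k = w
  induction k with
  | zero => simp
  | succ n ih =>
      rw [List.replicate_succ, List.flatten_cons, CoxeterSystem.wordProd_append, ih,
        pow_succ']

lemma commute_prod {r : ℕ} (x : AffW r) (l : List ℕ)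
    (h : ∀ e ∈ l, Commute x (rgen r e)) :
    Commute x ((l.map (rgen r)).prod) := by
  apply Commute.list_prod_right
  intro y hy
  obtain ⟨e, he, rfl⟩ := List.mem_map.mp hy
  exact h e he

/-! ### Conjugation lemmas -/

lemma conj_fullBlock (hr : 1 ≤ r) {j : ℕ} (h1 : 1 ≤ j) (h2 : j + 2 ≤ r) :
    fullBlockEl r * rgen r j = rgen r (j+1) * fullBlockEl r := by
  have hsplit : ascSeq 0 r = List.range' 0 j ++ (j :: (j+1) :: List.range' (j+2) (r-1-j)) := by
    show List.range' 0 (r+1-0) = _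
    rw [show r + 1 - 0 = j + (r+1-j) from by omega,
      ← List.range'_append (s := 0) (m := j) (n := r+1-j) (step := 1), one_mul, Nat.zero_add,
      show r+1-j = (r-1-j) + 1 + 1 from by omega,
      List.range'_succ, List.range'_succ]
  rw [fullBlockEl_eq, hsplit, List.map_append, List.prod_append, List.map_cons,
    List.map_cons, List.prod_cons, List.prod_cons]
  set P := ((List.range' 0 j).map (rgen r)).prod
  set Q := ((List.range' (j+2) (r-1-j)).map (rgen r)).prod
  set u := rgen r j
  set v := rgen r (j+1)
  have hQ : Commute u Q := by
    apply commute_prod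
    intro e he
    rw [List.mem_range'_1] at he
    exact rgen_comm hr (by omega) (by omega)
  have hP : Commute v P := by
    apply commute_prod
    intro e he
    rw [List.mem_range'_1] at he
    exact (rgen_comm hr (i := e) (by omega) (by omega)).symm
  have hbr : u * v * u = v * u * v := rgen_braid hr h1 h2
  calc P * (u * (v * Q)) * u
      = P * (u*v) * (Q*u) := by group
    _ = P * (u*v) * (u*Q) := by rw [← hQ.eq]
    _ = P * (u*v*u) * Q := by group
    _ = P * (v*u*v) * Q := by rw [hbr]
    _ = P*v*(u*(v*Q)) := by group
    _ = v*P*(u*(v*Q)) := by rw [← hP.eq]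
    _ = v * (P * (u * (v * Q))) := by group

lemma conj_block (hr : 1 ≤ r) {k j : ℕ} (hk : k ≤ r) (hj1 : 1 ≤ j) (hj2 : j + 2 ≤ k) :
    blockEl r k * rgen r j = rgen r (j+1) * blockEl r k := by
  rw [blockEl_split]
  set T := ((descSeq k (r-1)).map (rgen r)).prod
  have hT : Commute (rgen r j) T := by
    apply commute_prod
    intro e he
    rw [descSeq, List.mem_reverse, List.mem_range'_1] at he
    exact rgen_comm hr (by omega) (by omega)
  calc fullBlockEl r * T * rgen r j
      = fullBlockEl r * (rgen r j * T) := by rw [mul_assoc, hT.eq]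
    _ = fullBlockEl r * rgen r j * T := by rw [mul_assoc]
    _ = rgen r (j+1) * fullBlockEl r * T := by rw [conj_fullBlock hr hj1 (by omega)]
    _ = rgen r (j+1) * (fullBlockEl r * T) := by rw [mul_assoc]

lemma conj_block_list (hr : 1 ≤ r) {k : ℕ} (hk : k ≤ r) :
    ∀ (m a : ℕ), 2 ≤ a → a + m ≤ k →
    ((List.range' a m).map (rgen r)).prod * blockEl r k
      = blockEl r k * ((List.range' (a-1) m).map (rgen r)).prod := by
  intro m
  induction m with
  | zero => intro a _ _; simp
  | succ n ih =>
      intro a ha ham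
      rw [List.range'_succ, List.range'_succ, List.map_cons, List.map_cons,
        List.prod_cons, List.prod_cons, show a - 1 + 1 = a from by omega]
      have hc : blockEl r k * rgen r (a-1) = rgen r a * blockEl r k := by
        have := conj_block hr hk (j := a-1) (by omega) (by omega)
        rwa [show a - 1 + 1 = a from by omega] at this
      calc rgen r a * ((List.range' (a+1) n).map (rgen r)).prod * blockEl r k
          = rgen r a * (((List.range' (a+1) n).map (rgen r)).prod * blockEl r k) := by
            rw [mul_assoc]
        _ = rgen r a * (blockEl r k * ((List.range' a n).map (rgen r)).prod) := by
            rw [ih (a+1) (by omega) (by omega), show a + 1 - 1 = a from by omega]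
        _ = (rgen r a * blockEl r k) * ((List.range' a n).map (rgen r)).prod := by
            rw [mul_assoc]
        _ = (blockEl r k * rgen r (a-1)) * ((List.range' a n).map (rgen r)).prod := by
            rw [hc]
        _ = blockEl r k * (rgen r (a-1) * ((List.range' a n).map (rgen r)).prod) := by
            rw [mul_assoc]

lemma pow_block (hr : 1 ≤ r) {k : ℕ} (hk2 : k ≤ r) (hk1 : 2 ≤ k) :
    ∀ m, 1 ≤ m → m ≤ k - 1 →
    (blockEl r k * rgen r (k-1)) ^ m
      = blockEl r k ^ m * ((List.range' (k-m) m).map (rgen r)).prod := by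
  intro m
  induction m with
  | zero => omega
  | succ n ih =>
      intro _ hm
      rcases Nat.eq_zero_or_pos n with rfl | hn
      · simp
      set B := blockEl r k
      set t := rgen r (k-1)
      have hsplit : List.range' (k-(n+1)) (n+1) = List.range' (k-n-1) n ++ [k-1] := by
        rw [show k - (n+1) = k - n - 1 from by omega, List.range'_concat, one_mul,
          show k - n - 1 + n = k - 1 from by omega]
      rw [hsplit, List.map_append, List.prod_append, pow_succ, ih (by omega) (by omega),
        pow_succ]
      have hconj := conj_block_list hr hk2 n (k-n) (by omega) (by omega)
      rw [show k - n - 1 = k - n - 1 from rfl] at hconj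
      calc B ^ n * ((List.range' (k-n) n).map (rgen r)).prod * (B * t)
          = B ^ n * (((List.range' (k-n) n).map (rgen r)).prod * B) * t := by group
        _ = B ^ n * (B * ((List.range' (k-n-1) n).map (rgen r)).prod) * t := by
            rw [hconj]
        _ = B ^ n * B * (((List.range' (k-n-1) n).map (rgen r)).prod
              * (([k-1]).map (rgen r)).prod) := by simp only [List.map_cons,
                List.map_nil, List.prod_cons, List.prod_nil, mul_one]; group; rfl

lemma blockEl_pred (hr : 1 ≤ r) {k : ℕ} (hk1 : 2 ≤ k) (hk2 : k ≤ r) :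
    blockEl r (k-1) = blockEl r k * rgen r (k-1) := by
  rw [blockEl_split, blockEl_split, mul_assoc]
  congr 1
  have hd : descSeq (k-1) (r-1) = descSeq k (r-1) ++ [k-1] := by
    show (List.range' (k-1) (r-1+1-(k-1))).reverse = _
    rw [show r - 1 + 1 - (k-1) = (r-1+1-k) + 1 from by omega, List.range'_succ,
      List.reverse_cons, show k - 1 + 1 = k from by omega]
    rfl
  rw [hd, List.map_append, List.prod_append, List.map_cons, List.map_nil,
    List.prod_cons, List.prod_nil, mul_one]

lemma blockEl_one (hr : 1 ≤ r) {k : ℕ} (hk1 : 2 ≤ k) (hk2 : k ≤ r) :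
    blockEl r 1 = blockEl r k * ((descSeq 1 (k-1)).map (rgen r)).prod := by
  rw [blockEl_split r 1, blockEl_split r k, mul_assoc]
  congr 1
  have hd : descSeq 1 (r-1) = descSeq k (r-1) ++ descSeq 1 (k-1) := by
    show (List.range' 1 (r-1+1-1)).reverse
      = (List.range' k (r-1+1-k)).reverse ++ (List.range' 1 (k-1+1-1)).reverse
    rw [← List.reverse_append]
    congr 1
    have h := List.range'_append (s := 1) (m := k-1) (n := r-1+1-k) (step := 1)
    rw [show 1 + 1*(k-1) = k from by omega] at h
    rw [show k - 1 + 1 - 1 = k - 1 from by omega,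
      show r - 1 + 1 - 1 = (k-1) + (r-1+1-k) from by omega]
    exact h.symm
  rw [hd, List.map_append, List.prod_append]

lemma prod_rev_inv (hr : 1 ≤ r) :
    ∀ l : List ℕ, (∀ e ∈ l, e ≤ r) →
    ((l.map (rgen r)).prod) * ((l.reverse.map (rgen r)).prod) = 1 := by
  intro l
  induction l with
  | nil => simp
  | cons a l ih =>
      intro h
      have hml := ih (fun e he => h e (by simp [he]))
      simp only [List.reverse_cons, List.map_cons, List.map_append, List.prod_cons,
        List.prod_append, List.map_nil, List.prod_nil, mul_one]
      rw [show rgen r a * (l.map (rgen r)).prod * ((l.reverse.map (rgen r)).prod * rgen r a)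
          = rgen r a * ((l.map (rgen r)).prod * (l.reverse.map (rgen r)).prod) * rgen r a
          from by group, hml, mul_one, rgen_sq hr (h a (by simp))]

/-- For `2 ≤ k ≤ r`, the recursion
`ϖ_k = ϖ_{k-1} · (r_{k-1} r_{k-2} ⋯ r_1) · ϖ_1 · (r_1 r_2 ⋯ r_{k-1})` holds in `W`,
where `ϖ_1 = r_0 r_1 ⋯ r_{r-1} r_r r_{r-1} ⋯ r_1`. -/
theorem statement2 (r k : ℕ) (hr : 1 ≤ r) (hk1 : 2 ≤ k) (hk2 : k ≤ r) :
    piEl r k =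
      piEl r (k - 1) * ((descSeq 1 (k - 1)).map (rgen r)).prod * piEl r 1 *
        ((ascSeq 1 (k - 1)).map (rgen r)).prod := by
  have key := pow_block hr hk2 hk1 (k-1) (by omega) le_rfl
  rw [show k - (k-1) = 1 from by omega] at key
  have hasc : List.range' 1 (k-1) = ascSeq 1 (k-1) := rfl
  rw [hasc] at key
  have helem : ∀ e ∈ ascSeq 1 (k-1), e ≤ r := by
    intro e he
    rw [← hasc, List.mem_range'_1] at he
    omega
  have hAD : ((ascSeq 1 (k-1)).map (rgen r)).prod * ((descSeq 1 (k-1)).map (rgen r)).prod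
      = 1 := by
    have h := prod_rev_inv hr (ascSeq 1 (k-1)) helem
    rwa [show (ascSeq 1 (k-1)).reverse = descSeq 1 (k-1) from rfl] at h
  have hDA : ((descSeq 1 (k-1)).map (rgen r)).prod * ((ascSeq 1 (k-1)).map (rgen r)).prod
      = 1 := by
    have hrev : (descSeq 1 (k-1)).reverse = ascSeq 1 (k-1) := by
      show (List.range' 1 (k-1+1-1)).reverse.reverse = _
      rw [List.reverse_reverse]
      rfl
    have h := prod_rev_inv hr (descSeq 1 (k-1)) (by
      intro e he
      apply helem
      rw [← hrev, List.mem_reverse]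
      exact he)
    rwa [hrev] at h
  rw [piEl_eq r k, piEl_eq r (k-1), piEl_eq r 1, pow_one, blockEl_pred hr hk1 hk2,
    blockEl_one hr hk1 hk2, key]
  set B := blockEl r k
  set A := ((ascSeq 1 (k-1)).map (rgen r)).prod
  set D := ((descSeq 1 (k-1)).map (rgen r)).prod
  calc B ^ k = B^(k-1)*(A*D)*B*(D*A) := by
        rw [hAD, hDA, mul_one, mul_one, ← pow_succ, show k-1+1=k from by omega]
    _ = B^(k-1) * A * D * (B*D) * A := by group
end Aux
end
end

section
/- Assume r ≥ 3. For all integers j and k with 3 ≤ k ≤ r and 1 ≤ j ≤ k-2, the following identity holds in W: (r_0 r_1 ⋯ r_{r-1} r_r r_{r-1} ⋯ r_k) · r_j = r_{j+1} · (r_0 r_1 ⋯ r_{r-1} r_r r_{r-1} ⋯ r_k). -/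
noncomputable section

open CoxeterSystem
open Fin.NatCast

namespace Statement3Aux

section GroupCalc
variable {G : Type*} [Group G]

lemma comm_assoc {a b : G} (h : a * b = b * a) (x : G) :
    a * (b * x) = b * (a * x) := by rw [← mul_assoc, h, mul_assoc]

lemma braid_assoc {a c : G} (h : a * c * a = c * a * c) (x : G) :
    a * (c * (a * x)) = c * (a * (c * x)) := by
  rw [← mul_assoc, ← mul_assoc, h, mul_assoc, mul_assoc]

lemma braid_pairs (a b c d : G)
    (hac : a * c * a = c * a * c) (hbd' : b * (d * b) = d * (b * d))
    (hab : a * b = b * a) (hcd : c * d = d * c)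
    (hbc : b * c = c * b) (had : a * d = d * a) :
    a * b * (c * d) * (a * b) = c * d * (a * b) * (c * d) := by
  have had' : d * a = a * d := had.symm
  have hab' : b * a = a * b := hab.symm
  have hcd' : d * c = c * d := hcd.symm
  have L : a * (b * (c * (d * (a * b)))) = c * (a * (c * (d * (b * d)))) := by
    rw [comm_assoc hbc, comm_assoc had', comm_assoc hab', hbd', braid_assoc hac]
  have R : c * (d * (a * (b * (c * d)))) = c * (a * (c * (d * (b * d)))) := by
    rw [comm_assoc had', comm_assoc hbc, comm_assoc hcd']
  simp only [mul_assoc]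
  rw [L, R]

lemma key_calc (P x y Q : G) (hQ : x * Q = Q * x) (hP : y * P = P * y)
    (hb : x * y * x = y * x * y) :
    P * (x * (y * Q)) * x = y * (P * (x * (y * Q))) := by
  calc P * (x * (y * Q)) * x = P * (x * (y * (Q * x))) := by simp only [mul_assoc]
    _ = P * (x * (y * (x * Q))) := by rw [← hQ]
    _ = P * (x * y * x * Q) := by simp only [mul_assoc]
    _ = P * (y * x * y * Q) := by rw [hb]
    _ = P * (y * (x * (y * Q))) := by simp only [mul_assoc]
    _ = y * (P * (x * (y * Q))) := by rw [← mul_assoc, ← hP, mul_assoc]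

end GroupCalc

end Statement3Aux

namespace Statement3Aux

lemma M_eq_two (r a b : ℕ) (ha : a ≤ 2*r) (hb : b ≤ 2*r) (hab : a + 2 ≤ b)
    (h0 : ¬(a = 0 ∧ b = 2*r)) :
    (affACoxeterMatrix r).M ((a : ℕ) : Fin (2*r+1)) ((b : ℕ) : Fin (2*r+1)) = 2 := by
  have hval : ∀ c : ℕ, c ≤ 2*r → (((c : ℕ) : Fin (2*r+1)) : ℕ) = c := by
    intro c hc
    simp [Fin.val_natCast]
    omega
  have hm : ∀ c : ℕ, c ≤ 2*r → (c+1) % (2*r+1) = c+1 ∨ ((c+1) % (2*r+1) = 0 ∧ c = 2*r) := by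
    intro c hc
    rcases Nat.lt_or_ge (c+1) (2*r+1) with h | h
    · exact Or.inl (Nat.mod_eq_of_lt h)
    · have hc' : c = 2*r := by omega
      subst hc'
      right
      simp
  have hma := hm a ha
  have hmb := hm b hb
  simp only [affACoxeterMatrix]
  rw [if_neg, if_neg]
  · rintro (h | h) <;> apply_fun Fin.val at h
    · rw [hval a ha] at h
      rw [Fin.val_add] at h
      rw [hval b hb] at h
      simp [Fin.val_one] at h
      omega
    · rw [hval b hb, Fin.val_add, hval a ha] at h
      simp [Fin.val_one] at h
      omega
  · intro h
    apply_fun Fin.val at h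
    rw [hval a ha, hval b hb] at h
    omega

lemma M_eq_three (r a : ℕ) (ha : a + 1 ≤ 2*r) :
    (affACoxeterMatrix r).M ((a : ℕ) : Fin (2*r+1)) (((a+1 : ℕ) : ℕ) : Fin (2*r+1)) = 3 := by
  have hval : ∀ c : ℕ, c ≤ 2*r → (((c : ℕ) : Fin (2*r+1)) : ℕ) = c := by
    intro c hc
    simp [Fin.val_natCast]
    omega
  simp only [affACoxeterMatrix]
  rw [if_neg, if_pos]
  · right
    apply Fin.ext
    rw [hval (a+1) ha, Fin.val_add, hval a (by omega)]
    have e1 : ((1 : Fin (2*r+1)) : ℕ) = 1 := by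
      rw [Fin.val_one']
      exact Nat.mod_eq_of_lt (by omega)
    rw [e1, Nat.mod_eq_of_lt (by omega)]
  · intro h
    apply_fun Fin.val at h
    rw [hval a (by omega), hval (a+1) ha] at h
    omega

lemma scomm (r a b : ℕ) (ha : a ≤ 2*r) (hb : b ≤ 2*r) (hab : a + 2 ≤ b)
    (h0 : ¬(a = 0 ∧ b = 2*r)) : Commute (sgen r a) (sgen r b) := by
  have h2 := (affCS r).simple_mul_simple_pow ((a : ℕ) : Fin (2*r+1)) ((b : ℕ) : Fin (2*r+1))
  rw [M_eq_two r a b ha hb hab h0, pow_two] at h2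
  have triv : (sgen r a * sgen r b) * (sgen r b * sgen r a) = 1 := by
    have h3 := (affCS r).simple_mul_simple_self ((b : ℕ) : Fin (2*r+1))
    have h4 := (affCS r).simple_mul_simple_self ((a : ℕ) : Fin (2*r+1))
    calc (sgen r a * sgen r b) * (sgen r b * sgen r a)
        = sgen r a * (sgen r b * sgen r b) * sgen r a := by simp only [mul_assoc]
      _ = 1 := by rw [sgen, sgen, h3, mul_one, h4]
  have e1 : (sgen r a * sgen r b)⁻¹ = sgen r a * sgen r b := inv_eq_of_mul_eq_one_right h2
  have e2 : (sgen r a * sgen r b)⁻¹ = sgen r b * sgen r a := inv_eq_of_mul_eq_one_right triv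
  exact (e1.symm.trans e2)

lemma sbraid (r a : ℕ) (ha : a + 1 ≤ 2*r) :
    sgen r a * sgen r (a+1) * sgen r a = sgen r (a+1) * sgen r a * sgen r (a+1) := by
  have h3 := (affCS r).simple_mul_simple_pow ((a : ℕ) : Fin (2*r+1)) (((a+1 : ℕ) : ℕ) : Fin (2*r+1))
  rw [M_eq_three r a ha] at h3
  have hxx : sgen r a * sgen r a = 1 := (affCS r).simple_mul_simple_self _
  have hyy : sgen r (a+1) * sgen r (a+1) = 1 := (affCS r).simple_mul_simple_self _
  set x := sgen r a with hx
  set y := sgen r (a+1) with hy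
  have h3' : (x * y) ^ 3 = 1 := h3
  have h4 : (x * y * x) * (y * x * y) = 1 := by
    rw [pow_succ, pow_succ, pow_one] at h3'
    simp only [mul_assoc] at h3' ⊢
    exact h3'
  have h5 : (x * y * x) * (x * y * x) = 1 := by
    calc (x * y * x) * (x * y * x) = x * y * (x * x) * y * x := by simp only [mul_assoc]
      _ = x * (y * y) * x := by rw [hxx]; simp only [mul_assoc, one_mul, mul_one]
      _ = x * x := by rw [hyy]; simp only [mul_one]
      _ = 1 := hxx
  exact ((inv_eq_of_mul_eq_one_right h5).symm.trans (inv_eq_of_mul_eq_one_right h4))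

end Statement3Aux

namespace Statement3Aux

lemma rgen_zero (r : ℕ) : rgen r 0 = sgen r 0 := by
  simp [rgen, rword, sgen]

lemma rgen_mid (r i : ℕ) (h1 : 1 ≤ i) (h2 : i < r) :
    rgen r i = sgen r i * sgen r (2*r+1-i) := by
  unfold rgen rword
  rw [if_neg (by omega), if_pos h2, (affCS r).wordProd_cons, (affCS r).wordProd_singleton]
  rfl

lemma rgen_top (r : ℕ) (h : 1 ≤ r) :
    rgen r r = sgen r r * (sgen r (r+1) * sgen r r) := by
  unfold rgen rword
  rw [if_neg (by omega), if_neg (lt_irrefl r), (affCS r).wordProd_cons, (affCS r).wordProd_cons,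
    (affCS r).wordProd_singleton]
  rfl

lemma rcomm (r i j : ℕ) (hj : j ≤ r) (h : i + 2 ≤ j) :
    Commute (rgen r i) (rgen r j) := by
  have hi : i < r := by omega
  have hj2 : 2 ≤ j := by omega
  rcases Nat.eq_zero_or_pos i with rfl | hi1
  · rw [rgen_zero]
    rcases Nat.lt_or_ge j r with hjr | hjr
    · rw [rgen_mid r j (by omega) hjr]
      exact Commute.mul_right
        (scomm r 0 j (by omega) (by omega) (by omega) (by omega))
        (scomm r 0 (2*r+1-j) (by omega) (by omega) (by omega) (by omega))
    · have hjr' : j = r := by omega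
      rw [hjr', rgen_top r (by omega)]
      exact Commute.mul_right
        (scomm r 0 r (by omega) (by omega) (by omega) (by omega))
        (Commute.mul_right
          (scomm r 0 (r+1) (by omega) (by omega) (by omega) (by omega))
          (scomm r 0 r (by omega) (by omega) (by omega) (by omega)))
  · rw [rgen_mid r i hi1 hi]
    rcases Nat.lt_or_ge j r with hjr | hjr
    · rw [rgen_mid r j (by omega) hjr]
      refine Commute.mul_left (Commute.mul_right ?_ ?_) (Commute.mul_right ?_ ?_)
      · exact scomm r i j (by omega) (by omega) (by omega) (by omega)
      · exact scomm r i (2*r+1-j) (by omega) (by omega) (by omega) (by omega)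
      · exact (scomm r j (2*r+1-i) (by omega) (by omega) (by omega) (by omega)).symm
      · exact (scomm r (2*r+1-j) (2*r+1-i) (by omega) (by omega) (by omega) (by omega)).symm
    · have hjr' : j = r := by omega
      rw [hjr', rgen_top r (by omega)]
      refine Commute.mul_left
        (Commute.mul_right ?_ (Commute.mul_right ?_ ?_))
        (Commute.mul_right ?_ (Commute.mul_right ?_ ?_))
      · exact scomm r i r (by omega) (by omega) (by omega) (by omega)
      · exact scomm r i (r+1) (by omega) (by omega) (by omega) (by omega)
      · exact scomm r i r (by omega) (by omega) (by omega) (by omega)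
      · exact (scomm r r (2*r+1-i) (by omega) (by omega) (by omega) (by omega)).symm
      · exact (scomm r (r+1) (2*r+1-i) (by omega) (by omega) (by omega) (by omega)).symm
      · exact (scomm r r (2*r+1-i) (by omega) (by omega) (by omega) (by omega)).symm

lemma rbraid (r j : ℕ) (h1 : 1 ≤ j) (h2 : j + 2 ≤ r) :
    rgen r j * rgen r (j+1) * rgen r j = rgen r (j+1) * rgen r j * rgen r (j+1) := by
  rw [rgen_mid r j h1 (by omega), rgen_mid r (j+1) (by omega) (by omega)]
  rw [show 2*r+1-(j+1) = 2*r-j from by omega]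
  have hac : sgen r j * sgen r (j+1) * sgen r j = sgen r (j+1) * sgen r j * sgen r (j+1) :=
    sbraid r j (by omega)
  have hbd : sgen r (2*r-j) * sgen r (2*r+1-j) * sgen r (2*r-j)
      = sgen r (2*r+1-j) * sgen r (2*r-j) * sgen r (2*r+1-j) := by
    have h := sbraid r (2*r-j) (by omega)
    rw [show 2*r-j+1 = 2*r+1-j from by omega] at h
    exact h
  have hbd' : sgen r (2*r+1-j) * (sgen r (2*r-j) * sgen r (2*r+1-j))
      = sgen r (2*r-j) * (sgen r (2*r+1-j) * sgen r (2*r-j)) := by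
    simp only [mul_assoc] at hbd
    exact hbd.symm
  have hab : sgen r j * sgen r (2*r+1-j) = sgen r (2*r+1-j) * sgen r j :=
    (scomm r j (2*r+1-j) (by omega) (by omega) (by omega) (by omega)).eq
  have hcd : sgen r (j+1) * sgen r (2*r-j) = sgen r (2*r-j) * sgen r (j+1) :=
    (scomm r (j+1) (2*r-j) (by omega) (by omega) (by omega) (by omega)).eq
  have hbc : sgen r (2*r+1-j) * sgen r (j+1) = sgen r (j+1) * sgen r (2*r+1-j) :=
    (scomm r (j+1) (2*r+1-j) (by omega) (by omega) (by omega) (by omega)).eq.symm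
  have had : sgen r j * sgen r (2*r-j) = sgen r (2*r-j) * sgen r j :=
    (scomm r j (2*r-j) (by omega) (by omega) (by omega) (by omega)).eq
  exact braid_pairs _ _ _ _ hac hbd' hab hcd hbc had

lemma wordProd_flatten (r : ℕ) (L : List ℕ) :
    (affCS r).wordProd ((L.map (rword r)).flatten) = (L.map (rgen r)).prod := by
  induction L with
  | nil => simp
  | cons a L ih =>
    simp only [List.map_cons, List.flatten_cons, List.prod_cons,
      (affCS r).wordProd_append, ih]
    rfl

end Statement3Aux

open Statement3Aux

/-- For `r ≥ 3`, `3 ≤ k ≤ r` and `1 ≤ j ≤ k-2`, one has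
`(r_0 r_1 ⋯ r_{r-1} r_r r_{r-1} ⋯ r_k) · r_j = r_{j+1} · (r_0 r_1 ⋯ r_{r-1} r_r r_{r-1} ⋯ r_k)`
in `W`. -/
theorem statement3 (r k j : ℕ) (hr : 3 ≤ r) (hk1 : 3 ≤ k) (hk2 : k ≤ r)
    (hj1 : 1 ≤ j) (hj2 : j ≤ k - 2) :
    blockEl r k * rgen r j = rgen r (j + 1) * blockEl r k := by
  have hjk : j + 2 ≤ k := by omega
  have hjr : j + 2 ≤ r := by omega
  have hL : ascSeq 0 r = List.range' 0 j ++ (j :: (j+1) :: List.range' (j+2) (r-1-j)) := by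
    unfold ascSeq
    rw [show r + 1 - 0 = j + (r-1-j+2) from by omega]
    rw [← List.range'_append_1 (s := 0) (m := j) (n := r-1-j+2)]
    congr 1
    · rw [Nat.zero_add, show r-1-j+2 = (r-1-j+1) + 1 from by omega, List.range'_succ,
        List.range'_succ]
  have hblock : blockEl r k =
      ((List.range' 0 j).map (rgen r)).prod *
        (rgen r j * (rgen r (j+1) *
          (((List.range' (j+2) (r-1-j)).map (rgen r)).prod *
            ((descSeq k (r-1)).map (rgen r)).prod))) := by
    unfold blockEl blockWord
    rw [wordProd_flatten, hL]
    simp only [List.map_append, List.prod_append, List.map_cons, List.prod_cons, mul_assoc]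
  have c1 : Commute (rgen r j) (((List.range' (j+2) (r-1-j)).map (rgen r)).prod) := by
    refine Commute.list_prod_right _ _ ?_
    intro z hz
    obtain ⟨i, hi, rfl⟩ := List.mem_map.mp hz
    rw [List.mem_range'_1] at hi
    exact rcomm r j i (by omega) (by omega)
  have c2 : Commute (rgen r j) (((descSeq k (r-1)).map (rgen r)).prod) := by
    refine Commute.list_prod_right _ _ ?_
    intro z hz
    obtain ⟨i, hi, rfl⟩ := List.mem_map.mp hz
    unfold descSeq at hi
    rw [List.mem_reverse, List.mem_range'_1] at hi
    exact rcomm r j i (by omega) (by omega)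
  have hQ : rgen r j * (((List.range' (j+2) (r-1-j)).map (rgen r)).prod *
      ((descSeq k (r-1)).map (rgen r)).prod) =
      (((List.range' (j+2) (r-1-j)).map (rgen r)).prod *
      ((descSeq k (r-1)).map (rgen r)).prod) * rgen r j :=
    (Commute.mul_right c1 c2).eq
  have hP : rgen r (j+1) * ((List.range' 0 j).map (rgen r)).prod =
      ((List.range' 0 j).map (rgen r)).prod * rgen r (j+1) := by
    refine (Commute.list_prod_right _ _ ?_).eq
    intro z hz
    obtain ⟨i, hi, rfl⟩ := List.mem_map.mp hz
    rw [List.mem_range'_1] at hi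
    exact (rcomm r i (j+1) (by omega) (by omega)).symm
  have hb := rbraid r j hj1 hjr
  rw [hblock]
  exact key_calc _ _ _ _ hQ hP hb
end
end

section
/- Assume r ≥ 2. For every integer k with 1 ≤ k ≤ r-1, the element w_k = (r_1 r_2 ⋯ r_{k-1}) · (r_k r_{k-1} ⋯ r_1) · r_0 · (r_1 r_2 ⋯ r_{k-1}) · (r_k r_{k-1} ⋯ r_1) of W commutes with s_0 (for k = 1 this element is r_1 r_0 r_1). -/
noncomputable section

open CoxeterSystem
open Fin.NatCast

namespace Stmt8

variable {G : Type*} [Group G]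

/-- palindrome word x_{a+n} ⋯ x_{a+1} x_a x_{a+1} ⋯ x_{a+n} -/
def pal (x : ℕ → G) (a : ℕ) : ℕ → G
  | 0 => x a
  | n+1 => x (a+n+1) * pal x a n * x (a+n+1)

/-- ascending word x_a x_{a+1} ⋯ x_{a+n-1} (n letters) -/
def Aasc (x : ℕ → G) (a : ℕ) : ℕ → G
  | 0 => 1
  | n+1 => Aasc x a n * x (a+n)

/-- descending word x_{a+n-1} ⋯ x_a (n letters) -/
def Ddesc (x : ℕ → G) (a : ℕ) : ℕ → G
  | 0 => 1
  | n+1 => x (a+n) * Ddesc x a n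

structure Good (x : ℕ → G) (B : ℕ) : Prop where
  inv : ∀ i, x i * x i = 1
  br : ∀ i, x i * x (i+1) * x i = x (i+1) * x i * x (i+1)
  cm : ∀ i j, i + 2 ≤ j → j ≤ B → Commute (x i) (x j)

variable {x : ℕ → G} {B : ℕ}

lemma pal_zero (a : ℕ) : pal x a 0 = x a := rfl
lemma pal_succ (a n : ℕ) : pal x a (n+1) = x (a+n+1) * pal x a n * x (a+n+1) := rfl
lemma Aasc_succ (a n : ℕ) : Aasc x a (n+1) = Aasc x a n * x (a+n) := rfl
lemma Ddesc_succ (a n : ℕ) : Ddesc x a (n+1) = x (a+n) * Ddesc x a n := rfl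

lemma pal_comm {z : G} : ∀ n a, (∀ j, a ≤ j → j ≤ a + n → Commute (x j) z) →
    Commute (pal x a n) z := by
  intro n
  induction n with
  | zero => intro a hz; exact hz a le_rfl (by omega)
  | succ n ih =>
    intro a hz
    rw [pal_succ]
    exact ((hz (a+n+1) (by omega) (by omega)).mul_left
      (ih a (fun j h1 h2 => hz j h1 (by omega)))).mul_left (hz (a+n+1) (by omega) (by omega))

lemma Aasc_comm {z : G} : ∀ n a, (∀ j, a ≤ j → j < a + n → Commute (x j) z) →
    Commute (Aasc x a n) z := by
  intro n
  induction n with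
  | zero => intro a _; exact Commute.one_left z
  | succ n ih =>
    intro a hz
    rw [Aasc_succ]
    exact (ih a (fun j h1 h2 => hz j h1 (by omega))).mul_left (hz (a+n) (by omega) (by omega))

lemma Ddesc_comm {z : G} : ∀ n a, (∀ j, a ≤ j → j < a + n → Commute (x j) z) →
    Commute (Ddesc x a n) z := by
  intro n
  induction n with
  | zero => intro a _; exact Commute.one_left z
  | succ n ih =>
    intro a hz
    rw [Ddesc_succ]
    exact (hz (a+n) (by omega) (by omega)).mul_left (ih a (fun j h1 h2 => hz j h1 (by omega)))

lemma Aasc_left : ∀ n a, Aasc x a (n+1) = x a * Aasc x (a+1) n := by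
  intro n
  induction n with
  | zero => intro a; show Aasc x a 0 * x (a+0) = x a * Aasc x (a+1) 0
            show (1 : G) * x (a+0) = x a * 1
            rw [one_mul, mul_one]
            rfl
  | succ n ih =>
    intro a
    rw [Aasc_succ, ih a, Aasc_succ]
    have e : a+1+n = a+(n+1) := by omega
    rw [e, mul_assoc]

lemma Ddesc_right : ∀ n a, Ddesc x a (n+1) = Ddesc x (a+1) n * x a := by
  intro n
  induction n with
  | zero => intro a; show x (a+0) * Ddesc x a 0 = Ddesc x (a+1) 0 * x a
            show x (a+0) * 1 = 1 * x a
            rw [one_mul, mul_one]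
            rfl
  | succ n ih =>
    intro a
    rw [Ddesc_succ, ih a, Ddesc_succ]
    have e : a+1+n = a+(n+1) := by omega
    rw [e, mul_assoc]

private lemma conj_swap {u v w : G} (huv : u*v = v*u) : u*(v*w*v)*u = v*(u*w*u)*v := by
  calc u*(v*w*v)*u = (u*v)*w*(v*u) := by group
    _ = (v*u)*w*(v*u) := by rw [huv]
    _ = (v*u)*w*(u*v) := by nth_rewrite 2 [← huv]; rfl
    _ = v*(u*w*u)*v := by group

lemma pal_left (h : Good x B) : ∀ n a, a+n+1 ≤ B →
    pal x a (n+1) = x a * pal x (a+1) n * x a := by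
  intro n
  induction n with
  | zero =>
    intro a _
    rw [pal_succ, pal_zero, pal_zero]
    exact (h.br a).symm
  | succ n ih =>
    intro a hB
    rw [pal_succ, ih a (by omega), pal_succ]
    have e : a+1+n+1 = a+(n+1)+1 := by omega
    rw [e]
    exact conj_swap ((h.cm a (a+(n+1)+1) (by omega) (by omega)).symm.eq)

private lemma braid_step {t y D : G} (hbr : t*y*t = y*t*y) (hD : D*t*D = t*D*t)
    (hDy : D*y = y*D) (hyy : y*y = 1) : (t*D*t)*y*(t*D*t) = y*(t*D*t)*y := by
  calc (t*D*t)*y*(t*D*t) = t*D*(t*y*t)*D*t := by group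
    _ = t*D*(y*t*y)*D*t := by rw [hbr]
    _ = t*(D*y)*(t*(y*D)*t) := by group
    _ = t*(y*D)*(t*(y*D)*t) := by rw [hDy]
    _ = t*(y*D)*(t*(D*y)*t) := by nth_rewrite 2 [← hDy]; rfl
    _ = t*y*(D*t*D)*y*t := by group
    _ = t*y*(t*D*t)*y*t := by rw [hD]
    _ = (t*y*t)*D*(t*y*t) := by group
    _ = (y*t*y)*D*(y*t*y) := by rw [hbr]
    _ = y*t*(y*D)*y*(t*y) := by group
    _ = y*t*(D*y)*y*(t*y) := by rw [← hDy]
    _ = y*t*D*(y*y)*(t*y) := by group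
    _ = y*t*D*(1:G)*(t*y) := by rw [hyy]
    _ = y*(t*D*t)*y := by group

lemma pal_braid (h : Good x B) : ∀ n a b, b = a+n+1 → b ≤ B →
    pal x a n * x b * pal x a n = x b * pal x a n * x b := by
  intro n
  induction n with
  | zero =>
    intro a b hb _
    replace hb : b = a + 1 := by omega
    subst hb
    rw [pal_zero]
    exact h.br a
  | succ n ih =>
    intro a b hb hB
    replace hb : b = (a+n+1)+1 := by omega
    subst hb
    rw [pal_succ]
    have hbr := h.br (a+n+1)
    have hD := ih a (a+n+1) rfl (by omega)
    have hDy : Commute (pal x a n) (x ((a+n+1)+1)) :=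
      pal_comm n a (fun j h1 h2 => h.cm j ((a+n+1)+1) (by omega) (by omega))
    exact braid_step hbr hD hDy.eq (h.inv ((a+n+1)+1))

private lemma comm_inner_step {t u E : G} (hbr : t*u*t = u*t*u) (hE : E*u = u*E) :
    t * (u*(t*E*t)*u) = (u*(t*E*t)*u) * t := by
  calc t*(u*(t*E*t)*u) = (t*u*t)*E*(t*u) := by group
    _ = (u*t*u)*E*(t*u) := by rw [hbr]
    _ = u*t*(u*E)*(t*u) := by group
    _ = u*t*(E*u)*(t*u) := by rw [← hE]
    _ = u*t*E*(u*t*u) := by group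
    _ = u*t*E*(t*u*t) := by rw [← hbr]
    _ = (u*(t*E*t)*u)*t := by group

lemma pal_comm_inner (h : Good x B) : ∀ n a j, a+1 ≤ j → j+1 ≤ a+n → a+n ≤ B →
    Commute (x j) (pal x a n) := by
  intro n
  induction n with
  | zero => intro a j h1 h2 _; omega
  | succ n ih =>
    intro a j h1 h2 hB
    rw [pal_succ]
    by_cases hc : j+1 ≤ a+n
    · have c1 : Commute (x j) (x (a+n+1)) := h.cm j (a+n+1) (by omega) (by omega)
      exact (c1.mul_right (ih a j h1 hc (by omega))).mul_right c1
    · have hj : j = a+n := by omega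
      subst hj
      obtain ⟨m, rfl⟩ : ∃ m, n = m+1 := ⟨n-1, by omega⟩
      show x (a+(m+1)) * (x (a+(m+1)+1) * pal x a (m+1) * x (a+(m+1)+1))
          = (x (a+(m+1)+1) * pal x a (m+1) * x (a+(m+1)+1)) * x (a+(m+1))
      rw [pal_succ]
      have hbr := h.br (a+m+1)
      have hE : Commute (pal x a m) (x ((a+m+1)+1)) :=
        pal_comm m a (fun j h1 h2 => h.cm j ((a+m+1)+1) (by omega) (by omega))
      exact comm_inner_step hbr hE.eq

lemma pal_merge (h : Good x B) : ∀ m a n b t, b = a+n+1 → t = n+m+1 → a+t ≤ B →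
    pal x b m * pal x a n * pal x b m = pal x a t := by
  intro m
  induction m with
  | zero =>
    intro a n b t hb ht hB
    replace ht : t = n+1 := by omega
    subst ht; subst hb
    rw [pal_zero, pal_succ]
  | succ m ih =>
    intro a n b t hb ht hB
    replace ht : t = (n+1)+m+1 := by omega
    subst ht; subst hb
    rw [pal_left h m (a+n+1) (by omega)]
    have hmid : x (a+n+1) * pal x a n * x (a+n+1) = pal x a (n+1) := (pal_succ a n).symm
    have hih : pal x (a+n+1+1) m * pal x a (n+1) * pal x (a+n+1+1) m = pal x a ((n+1)+m+1) :=
      ih a (n+1) (a+n+1+1) ((n+1)+m+1) (by omega) rfl (by omega)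
    have hcomm : Commute (x (a+n+1)) (pal x a ((n+1)+m+1)) :=
      pal_comm_inner h ((n+1)+m+1) a (a+n+1) (by omega) (by omega) (by omega)
    have hxx : x (a+n+1) * x (a+n+1) = 1 := h.inv (a+n+1)
    calc (x (a+n+1) * pal x (a+n+1+1) m * x (a+n+1)) * pal x a n *
          (x (a+n+1) * pal x (a+n+1+1) m * x (a+n+1))
        = x (a+n+1) * (pal x (a+n+1+1) m * (x (a+n+1) * pal x a n * x (a+n+1)) *
            pal x (a+n+1+1) m) * x (a+n+1) := by group
      _ = x (a+n+1) * (pal x (a+n+1+1) m * pal x a (n+1) * pal x (a+n+1+1) m) * x (a+n+1) := by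
          rw [hmid]
      _ = x (a+n+1) * pal x a ((n+1)+m+1) * x (a+n+1) := by rw [hih]
      _ = pal x a ((n+1)+m+1) * x (a+n+1) * x (a+n+1) := by rw [hcomm.eq]
      _ = pal x a ((n+1)+m+1) * (x (a+n+1) * x (a+n+1)) := by group
      _ = pal x a ((n+1)+m+1) := by rw [hxx, mul_one]

lemma pal_split1 (h : Good x B) : ∀ n a, a+n ≤ B →
    pal x a n = Aasc x a n * x (a+n) * Ddesc x a n := by
  intro n
  induction n with
  | zero =>
    intro a _
    show x a = (1:G) * x (a+0) * 1
    rw [one_mul, mul_one]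
    rfl
  | succ n ih =>
    intro a hB
    rw [pal_left h n a (by omega), ih (a+1) (by omega), Aasc_left, Ddesc_right]
    have e : a+1+n = a+(n+1) := by omega
    rw [e]
    group

lemma pal_split2 : ∀ n a, pal x a n = Ddesc x (a+1) n * x a * Aasc x (a+1) n := by
  intro n
  induction n with
  | zero =>
    intro a
    show x a = (1:G) * x a * 1
    rw [one_mul, mul_one]
  | succ n ih =>
    intro a
    rw [pal_succ, ih a, Ddesc_succ, Aasc_succ]
    have e : a+1+n = a+n+1 := by omega
    rw [e]
    group

theorem main_abstract (h : Good x B) (d : ℕ) (hB : 2*d+2 ≤ B) :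
    (pal x (d+2) d * pal x 0 d * x (d+1) * (pal x (d+2) d * pal x 0 d)) * x (d+1)
      = x (d+1) * (pal x (d+2) d * pal x 0 d * x (d+1) * (pal x (d+2) d * pal x 0 d)) := by
  have hUV : Commute (pal x (d+2) d) (pal x 0 d) :=
    pal_comm d (d+2) (fun j h1 h2 =>
      (pal_comm d 0 (fun i hi1 hi2 => h.cm i j (by omega) (by omega))).symm)
  have hVb : pal x 0 d * x (d+1) * pal x 0 d = x (d+1) * pal x 0 d * x (d+1) :=
    pal_braid h d 0 (d+1) (by omega) (by omega)
  have hpal01 : pal x 0 (d+1) = x (d+1) * pal x 0 d * x (d+1) := by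
    rw [pal_succ, Nat.zero_add]
  have hmerge : pal x (d+2) d * pal x 0 (d+1) * pal x (d+2) d = pal x 0 (2*d+2) :=
    pal_merge h d 0 (d+1) (d+2) (2*d+2) (by omega) (by omega) (by omega)
  have hfin : Commute (x (d+1)) (pal x 0 (2*d+2)) :=
    pal_comm_inner h (2*d+2) 0 (d+1) (by omega) (by omega) (by omega)
  have hw : pal x (d+2) d * pal x 0 d * x (d+1) * (pal x (d+2) d * pal x 0 d)
      = pal x 0 (2*d+2) := by
    calc pal x (d+2) d * pal x 0 d * x (d+1) * (pal x (d+2) d * pal x 0 d)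
        = pal x (d+2) d * (pal x 0 d * x (d+1) * pal x 0 d) * pal x (d+2) d := by
          nth_rewrite 2 [hUV.eq]
          group
      _ = pal x (d+2) d * (x (d+1) * pal x 0 d * x (d+1)) * pal x (d+2) d := by rw [hVb]
      _ = pal x (d+2) d * pal x 0 (d+1) * pal x (d+2) d := by rw [hpal01]
      _ = pal x 0 (2*d+2) := hmerge
  rw [hw]
  exact hfin.symm.eq

end Stmt8

-- ######## concrete helper lemmas ########
namespace Stmt8C

lemma cast_eq_iff (r : ℕ) (u v : ℕ) (huv : u ≤ v) :
    (((u : ℕ) : Fin (2*r+1)) = ((v : ℕ) : Fin (2*r+1))) ↔ (2*r+1) ∣ (v - u) := by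
  rw [Fin.ext_iff, Fin.val_natCast, Fin.val_natCast]
  exact Nat.modEq_iff_dvd' huv

lemma sgen_self (r p : ℕ) : sgen r p * sgen r p = 1 :=
  (affCS r).simple_mul_simple_self _

lemma sgen_period (r q : ℕ) : sgen r (2*r+1+q) = sgen r q := by
  unfold sgen
  congr 1
  rw [Nat.cast_add, Fin.natCast_self, zero_add]

lemma sgen_braid (r : ℕ) (hr : 1 ≤ r) (p : ℕ) : sgen r p * sgen r (p+1) * sgen r p
    = sgen r (p+1) * sgen r p * sgen r (p+1) := by
  unfold sgen
  have hcast : ((p+1 : ℕ) : Fin (2*r+1)) = ((p : ℕ) : Fin (2*r+1)) + 1 := Nat.cast_add_one p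
  rw [hcast]
  set a : Fin (2*r+1) := ((p : ℕ) : Fin (2*r+1)) with ha
  have hne : a ≠ a + 1 := by
    intro hEq
    have h1 : (1 : Fin (2*r+1)) = 0 := by
      have := left_eq_add.mp hEq
      exact this
    have h2 : ((1:ℕ) : Fin (2*r+1)) = 0 := by rw [Nat.cast_one]; exact h1
    rw [Fin.natCast_eq_zero, Nat.dvd_one] at h2
    omega
  have hM : (affACoxeterMatrix r).M a (a+1) = 3 := by
    show (if a = a+1 then 1 else if a = (a+1) + 1 ∨ a+1 = a + 1 then 3 else 2) = 3
    rw [if_neg hne, if_pos (Or.inr rfl)]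
  have hp := (affCS r).simple_mul_simple_pow a (a+1)
  rw [hM] at hp
  have hp2 : ((affCS r).simple a * (affCS r).simple (a+1)) *
      ((affCS r).simple a * (affCS r).simple (a+1)) *
      ((affCS r).simple a * (affCS r).simple (a+1)) = 1 := by
    rw [← hp]; rw [pow_succ, pow_succ, pow_one]
  have h3 : ((affCS r).simple a * (affCS r).simple (a+1) * (affCS r).simple a) *
      ((affCS r).simple (a+1) * (affCS r).simple a * (affCS r).simple (a+1)) = 1 := by
    rw [← hp2]; group
  have h4 := eq_inv_of_mul_eq_one_left h3
  rw [mul_inv_rev, mul_inv_rev, (affCS r).inv_simple, (affCS r).inv_simple] at h4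
  rw [h4]
  group

lemma sgen_comm (r : ℕ) (p d : ℕ) (h2 : 2 ≤ d) (h3 : d + 2 ≤ 2*r+1) :
    sgen r p * sgen r (p+d) = sgen r (p+d) * sgen r p := by
  unfold sgen
  have hne1 : ((p : ℕ) : Fin (2*r+1)) ≠ ((p+d : ℕ) : Fin (2*r+1)) := by
    intro hEq
    rw [cast_eq_iff r p (p+d) (by omega)] at hEq
    have h5 : (2*r+1) ∣ d := by
      have e : p + d - p = d := by omega
      rwa [e] at hEq
    have := Nat.le_of_dvd (by omega) h5
    omega
  have hor : ¬(((p : ℕ) : Fin (2*r+1)) = ((p+d : ℕ) : Fin (2*r+1)) + 1 ∨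
      ((p+d : ℕ) : Fin (2*r+1)) = ((p : ℕ) : Fin (2*r+1)) + 1) := by
    rintro (hc1 | hc2)
    · rw [← Nat.cast_add_one] at hc1
      rw [cast_eq_iff r p (p+d+1) (by omega)] at hc1
      have h5 : (2*r+1) ∣ (d+1) := by
        have e : p + d + 1 - p = d + 1 := by omega
        rwa [e] at hc1
      have := Nat.le_of_dvd (by omega) h5
      omega
    · replace hc2 := hc2.symm
      rw [← Nat.cast_add_one] at hc2
      rw [cast_eq_iff r (p+1) (p+d) (by omega)] at hc2
      have h5 : (2*r+1) ∣ (d-1) := by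
        have e : p + d - (p+1) = d - 1 := by omega
        rwa [e] at hc2
      have := Nat.le_of_dvd (by omega) h5
      omega
  have hM : (affACoxeterMatrix r).M ((p : ℕ) : Fin (2*r+1)) ((p+d : ℕ) : Fin (2*r+1)) = 2 := by
    show (if ((p : ℕ) : Fin (2*r+1)) = ((p+d : ℕ) : Fin (2*r+1)) then 1
      else if ((p : ℕ) : Fin (2*r+1)) = ((p+d : ℕ) : Fin (2*r+1)) + 1 ∨
        ((p+d : ℕ) : Fin (2*r+1)) = ((p : ℕ) : Fin (2*r+1)) + 1 then 3 else 2) = 2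
    rw [if_neg hne1, if_neg hor]
  have hp := (affCS r).simple_mul_simple_pow ((p : ℕ) : Fin (2*r+1)) ((p+d : ℕ) : Fin (2*r+1))
  rw [hM] at hp
  have hp2 : ((affCS r).simple ((p : ℕ) : Fin (2*r+1)) *
      (affCS r).simple ((p+d : ℕ) : Fin (2*r+1))) *
      ((affCS r).simple ((p : ℕ) : Fin (2*r+1)) *
      (affCS r).simple ((p+d : ℕ) : Fin (2*r+1))) = 1 := by
    rw [← hp, pow_succ, pow_one]
  have h4 := eq_inv_of_mul_eq_one_left hp2
  rw [mul_inv_rev, (affCS r).inv_simple, (affCS r).inv_simple] at h4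
  exact h4

lemma rgen_zero (r : ℕ) : rgen r 0 = sgen r 0 := by
  unfold rgen rword sgen
  rw [if_pos rfl]
  rw [(affCS r).wordProd_cons, (affCS r).wordProd_nil, mul_one, Nat.cast_zero]

lemma rgen_eq (r i : ℕ) (h1 : 1 ≤ i) (h2 : i < r) :
    rgen r i = sgen r i * sgen r (2*r+1-i) := by
  unfold rgen rword sgen
  rw [if_neg (by omega), if_pos h2]
  rw [(affCS r).wordProd_cons, (affCS r).wordProd_cons, (affCS r).wordProd_nil, mul_one]

/-- the chain of simple generators around node 0 -/
def xg (r k : ℕ) : ℕ → AffW r := fun j => sgen r (2*r+1-k+j)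

lemma xg_good (r k : ℕ) (hk1 : 1 ≤ k) (hk2 : k ≤ r-1) (hr : 2 ≤ r) :
    Stmt8.Good (xg r k) (2*k) := by
  constructor
  · intro i; exact sgen_self r _
  · intro i; exact sgen_braid r (by omega) (2*r+1-k+i)
  · intro i j hij hjB
    obtain ⟨d, rfl⟩ : ∃ d, j = i + d := ⟨j - i, by omega⟩
    have h := sgen_comm r (2*r+1-k+i) d (by omega) (by omega)
    show sgen r (2*r+1-k+i) * sgen r (2*r+1-k+(i+d))
        = sgen r (2*r+1-k+(i+d)) * sgen r (2*r+1-k+i)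
    have e : 2*r+1-k+(i+d) = 2*r+1-k+i+d := by omega
    rw [e]
    exact h

lemma xg_center (r k : ℕ) (hk2 : k ≤ r) : xg r k k = sgen r 0 := by
  show sgen r (2*r+1-k+k) = sgen r 0
  have e : 2*r+1-k+k = 2*r+1+0 := by omega
  rw [e, sgen_period]

lemma xg_hi (r k i : ℕ) (h1 : i ≤ k) (hk2 : k ≤ r) : xg r k (k+i) = sgen r i := by
  show sgen r (2*r+1-k+(k+i)) = sgen r i
  have e : 2*r+1-k+(k+i) = 2*r+1+i := by omega
  rw [e, sgen_period]

lemma xg_lo (r k i : ℕ) (h1 : i ≤ k) (hk2 : k ≤ r) : xg r k (k-i) = sgen r (2*r+1-i) := by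
  show sgen r (2*r+1-k+(k-i)) = sgen r (2*r+1-i)
  congr 1
  omega

lemma ascProd_eq (r K : ℕ) (hr : 2 ≤ r) (hk2 : K+1 ≤ r-1)
    (hg : Stmt8.Good (xg r (K+1)) (2*(K+1))) :
    ∀ m, m ≤ K+1 → ((ascSeq 1 m).map (rgen r)).prod
      = Stmt8.Aasc (xg r (K+1)) (K+2) m * Stmt8.Ddesc (xg r (K+1)) (K+1-m) m := by
  intro m
  induction m with
  | zero =>
    intro _
    simp [ascSeq, Stmt8.Aasc, Stmt8.Ddesc]
  | succ m ih =>
    intro hm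
    have hseq : ascSeq 1 (m+1) = ascSeq 1 m ++ [m+1] := by
      show List.range' 1 (m+1+1-1) = List.range' 1 (m+1-1) ++ [m+1]
      have e1 : m+1+1-1 = m+1 := by omega
      have e2 : m+1-1 = m := by omega
      rw [e1, e2, List.range'_concat]
      rw [show 1+1*m = m+1 from by omega]
    rw [hseq, List.map_append, List.prod_append, ih (by omega)]
    simp only [List.map_cons, List.map_nil, List.prod_cons, List.prod_nil, mul_one]
    rw [rgen_eq r (m+1) (by omega) (by omega)]
    have hx1 : sgen r (m+1) = xg r (K+1) (K+1+(m+1)) :=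
      (xg_hi r (K+1) (m+1) (by omega) (by omega)).symm
    have hx2 : sgen r (2*r+1-(m+1)) = xg r (K+1) (K+1-(m+1)) :=
      (xg_lo r (K+1) (m+1) (by omega) (by omega)).symm
    rw [hx1, hx2]
    have hcomm : Commute (Stmt8.Ddesc (xg r (K+1)) (K+1-m) m) (xg r (K+1) (K+1+(m+1))) :=
      Stmt8.Ddesc_comm m (K+1-m) (fun j h1 h2 => hg.cm j (K+1+(m+1)) (by omega) (by omega))
    calc Stmt8.Aasc (xg r (K+1)) (K+2) m * Stmt8.Ddesc (xg r (K+1)) (K+1-m) m *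
          (xg r (K+1) (K+1+(m+1)) * xg r (K+1) (K+1-(m+1)))
        = Stmt8.Aasc (xg r (K+1)) (K+2) m *
            (Stmt8.Ddesc (xg r (K+1)) (K+1-m) m * xg r (K+1) (K+1+(m+1))) *
            xg r (K+1) (K+1-(m+1)) := by group
      _ = Stmt8.Aasc (xg r (K+1)) (K+2) m *
            (xg r (K+1) (K+1+(m+1)) * Stmt8.Ddesc (xg r (K+1)) (K+1-m) m) *
            xg r (K+1) (K+1-(m+1)) := by rw [hcomm.eq]
      _ = (Stmt8.Aasc (xg r (K+1)) (K+2) m * xg r (K+1) (K+1+(m+1))) *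
            (Stmt8.Ddesc (xg r (K+1)) (K+1-m) m * xg r (K+1) (K+1-(m+1))) := by group
      _ = Stmt8.Aasc (xg r (K+1)) (K+2) (m+1) * Stmt8.Ddesc (xg r (K+1)) (K+1-(m+1)) (m+1) := by
          rw [Stmt8.Aasc_succ, Stmt8.Ddesc_right,
            show (K+2)+m = K+1+(m+1) from by omega,
            show (K+1-(m+1))+1 = K+1-m from by omega]

lemma descProd_eq (r K : ℕ) (hr : 2 ≤ r) (hk2 : K+1 ≤ r-1)
    (hg : Stmt8.Good (xg r (K+1)) (2*(K+1))) :
    ∀ m, m ≤ K+1 → ((descSeq 1 m).map (rgen r)).prod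
      = Stmt8.Ddesc (xg r (K+1)) (K+2) m * Stmt8.Aasc (xg r (K+1)) (K+1-m) m := by
  intro m
  induction m with
  | zero =>
    intro _
    simp [descSeq, Stmt8.Aasc, Stmt8.Ddesc]
  | succ m ih =>
    intro hm
    have hseq : descSeq 1 (m+1) = (m+1) :: descSeq 1 m := by
      show (List.range' 1 (m+1+1-1)).reverse = (m+1) :: (List.range' 1 (m+1-1)).reverse
      have e1 : m+1+1-1 = m+1 := by omega
      have e2 : m+1-1 = m := by omega
      rw [e1, e2, List.range'_concat, List.reverse_append]
      simp only [List.reverse_singleton, List.singleton_append]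
      rw [show 1+1*m = m+1 from by omega]
    rw [hseq, List.map_cons, List.prod_cons, ih (by omega)]
    rw [rgen_eq r (m+1) (by omega) (by omega)]
    have hx1 : sgen r (m+1) = xg r (K+1) (K+1+(m+1)) :=
      (xg_hi r (K+1) (m+1) (by omega) (by omega)).symm
    have hx2 : sgen r (2*r+1-(m+1)) = xg r (K+1) (K+1-(m+1)) :=
      (xg_lo r (K+1) (m+1) (by omega) (by omega)).symm
    rw [hx1, hx2]
    have hcomm : Commute (xg r (K+1) (K+1-(m+1))) (Stmt8.Ddesc (xg r (K+1)) (K+2) m) :=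
      (Stmt8.Ddesc_comm m (K+2) (fun j h1 h2 =>
        (hg.cm (K+1-(m+1)) j (by omega) (by omega)).symm)).symm
    calc (xg r (K+1) (K+1+(m+1)) * xg r (K+1) (K+1-(m+1))) *
          (Stmt8.Ddesc (xg r (K+1)) (K+2) m * Stmt8.Aasc (xg r (K+1)) (K+1-m) m)
        = xg r (K+1) (K+1+(m+1)) *
            (xg r (K+1) (K+1-(m+1)) * Stmt8.Ddesc (xg r (K+1)) (K+2) m) *
            Stmt8.Aasc (xg r (K+1)) (K+1-m) m := by group
      _ = xg r (K+1) (K+1+(m+1)) *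
            (Stmt8.Ddesc (xg r (K+1)) (K+2) m * xg r (K+1) (K+1-(m+1))) *
            Stmt8.Aasc (xg r (K+1)) (K+1-m) m := by rw [hcomm.eq]
      _ = (xg r (K+1) (K+1+(m+1)) * Stmt8.Ddesc (xg r (K+1)) (K+2) m) *
            (xg r (K+1) (K+1-(m+1)) * Stmt8.Aasc (xg r (K+1)) (K+1-m) m) := by group
      _ = Stmt8.Ddesc (xg r (K+1)) (K+2) (m+1) * Stmt8.Aasc (xg r (K+1)) (K+1-(m+1)) (m+1) := by
          rw [Stmt8.Ddesc_succ, Stmt8.Aasc_left,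
            show (K+2)+m = K+1+(m+1) from by omega,
            show (K+1-(m+1))+1 = K+1-m from by omega]

end Stmt8C

/-- For `r ≥ 2` and `1 ≤ k ≤ r-1`, the element
`w_k = (r_1 r_2 ⋯ r_{k-1}) · (r_k r_{k-1} ⋯ r_1) · r_0 · (r_1 r_2 ⋯ r_{k-1}) · (r_k r_{k-1} ⋯ r_1)`
of `W` commutes with `s_0`. -/
theorem statement8 (r k : ℕ) (hr : 2 ≤ r) (hk1 : 1 ≤ k) (hk2 : k ≤ r - 1) :
    ((ascSeq 1 (k - 1)).map (rgen r)).prod * ((descSeq 1 k).map (rgen r)).prod *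
        rgen r 0 * ((ascSeq 1 (k - 1)).map (rgen r)).prod * ((descSeq 1 k).map (rgen r)).prod *
        sgen r 0 =
      sgen r 0 *
        (((ascSeq 1 (k - 1)).map (rgen r)).prod * ((descSeq 1 k).map (rgen r)).prod *
          rgen r 0 * ((ascSeq 1 (k - 1)).map (rgen r)).prod *
          ((descSeq 1 k).map (rgen r)).prod) := by

  obtain ⟨K, rfl⟩ : ∃ K, k = K + 1 := ⟨k-1, by omega⟩
  have hg : Stmt8.Good (Stmt8C.xg r (K+1)) (2*(K+1)) :=
    Stmt8C.xg_good r (K+1) (by omega) (by omega) hr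
  have e1 : K+1-1 = K := by omega
  rw [e1, Stmt8C.ascProd_eq r K hr hk2 hg K (by omega),
      Stmt8C.descProd_eq r K hr hk2 hg (K+1) (by omega),
      Stmt8C.rgen_zero r,
      show K+1-K = 1 from by omega, show K+1-(K+1) = 0 from by omega,
      show sgen r 0 = Stmt8C.xg r (K+1) (K+1) from (Stmt8C.xg_center r (K+1) (by omega)).symm]
  set T : ℕ → AffW r := Stmt8C.xg r (K+1) with hT
  set A1 : AffW r := Stmt8.Aasc T (K+2) K with hA1
  set D1 : AffW r := Stmt8.Ddesc T 1 K with hD1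
  set D2 : AffW r := Stmt8.Ddesc T (K+2) (K+1) with hD2
  set A2 : AffW r := Stmt8.Aasc T 0 (K+1) with hA2
  have hDD : Commute D1 D2 :=
    Stmt8.Ddesc_comm K 1 (fun j h1 h2 =>
      (Stmt8.Ddesc_comm (K+1) (K+2) (fun i hi1 hi2 =>
        (hg.cm j i (by omega) (by omega)).symm)).symm)
  have hU : Stmt8.pal T (K+2) K = A1 * T ((K+2)+K) * Stmt8.Ddesc T (K+2) K :=
    Stmt8.pal_split1 hg K (K+2) (by omega)
  have hV : Stmt8.pal T 0 K = D1 * T 0 * Stmt8.Aasc T 1 K :=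
    Stmt8.pal_split2 K 0
  have hd2 : D2 = T ((K+2)+K) * Stmt8.Ddesc T (K+2) K := Stmt8.Ddesc_succ (K+2) K
  have ha2 : A2 = T 0 * Stmt8.Aasc T 1 K := Stmt8.Aasc_left K 0
  have hAB : A1 * D1 * (D2 * A2) = Stmt8.pal T (K+2) K * Stmt8.pal T 0 K := by
    calc A1 * D1 * (D2 * A2) = A1 * (D1 * D2) * A2 := by group
      _ = A1 * (D2 * D1) * A2 := by rw [hDD.eq]
      _ = A1 * ((T ((K+2)+K) * Stmt8.Ddesc T (K+2) K) * D1) * (T 0 * Stmt8.Aasc T 1 K) := by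
          rw [hd2, ha2]
      _ = (A1 * T ((K+2)+K) * Stmt8.Ddesc T (K+2) K) * (D1 * T 0 * Stmt8.Aasc T 1 K) := by
          group
      _ = Stmt8.pal T (K+2) K * Stmt8.pal T 0 K := by rw [← hU, ← hV]
  have habs := Stmt8.main_abstract hg K (by omega)
  trans ((A1 * D1 * (D2 * A2)) * T (K+1) * (A1 * D1 * (D2 * A2))) * T (K+1)
  · group
  trans T (K+1) * ((A1 * D1 * (D2 * A2)) * T (K+1) * (A1 * D1 * (D2 * A2)))
  · rw [hAB]
    exact habs
  · group
end
end

section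
/- For all k₁, k₂, l ∈ ℤ the following identity holds: 𝕊(k₁, k₂+1 | l) + 𝕊(k₁+1, k₂ | l) − (v + v^{-1}) · 𝕊(k₁+1, k₂+1 | l−1) = 0. -/
noncomputable section

private lemma aux15 {R : Type*} [Field R] {A : Type*} [Ring A] [Algebra R A]
    (v : R) (hv : v ≠ 0) (a b a' b' u z : A)
    (hxxE : a * b' - v⁻¹ ^ 2 • (b' * a) - v⁻¹ ^ 2 • (a' * b - v ^ 2 • (b * a')) = 0)
    (haE : a * u - v • (u * a) - v • (a' * z - v⁻¹ • (z * a')) = 0)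
    (hbE : b * u - v • (u * b) - v • (b' * z - v⁻¹ • (z * b')) = 0) :
    (a * b' * u - (v + v⁻¹) • (a * u * b') + u * a * b' +
        (b' * a * u - (v + v⁻¹) • (b' * u * a) + u * b' * a)) +
      (a' * b * u - (v + v⁻¹) • (a' * u * b) + u * a' * b +
        (b * a' * u - (v + v⁻¹) • (b * u * a') + u * b * a')) -
      (v + v⁻¹) • ((a' * b' * z - (v + v⁻¹) • (a' * z * b') + z * a' * b' +
        (b' * a' * z - (v + v⁻¹) • (b' * z * a') + z * b' * a'))) = 0 := by
  have key : (a * b' * u - (v + v⁻¹) • (a * u * b') + u * a * b' +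
        (b' * a * u - (v + v⁻¹) • (b' * u * a) + u * b' * a)) +
      (a' * b * u - (v + v⁻¹) • (a' * u * b) + u * a' * b +
        (b * a' * u - (v + v⁻¹) • (b * u * a') + u * b * a')) -
      (v + v⁻¹) • ((a' * b' * z - (v + v⁻¹) • (a' * z * b') + z * a' * b' +
        (b' * a' * z - (v + v⁻¹) • (b' * z * a') + z * b' * a'))) =
      (a * b' - v⁻¹ ^ 2 • (b' * a) - v⁻¹ ^ 2 • (a' * b - v ^ 2 • (b * a'))) * u
        - v ^ 2 • (u * (a * b' - v⁻¹ ^ 2 • (b' * a) - v⁻¹ ^ 2 • (a' * b - v ^ 2 • (b * a'))))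
        + (1 + v⁻¹ ^ 2) • (b' * (a * u - v • (u * a) - v • (a' * z - v⁻¹ • (z * a')))
            + a' * (b * u - v • (u * b) - v • (b' * z - v⁻¹ • (z * b'))))
        - (v + v⁻¹) • ((a * u - v • (u * a) - v • (a' * z - v⁻¹ • (z * a'))) * b'
            + (b * u - v • (u * b) - v • (b' * z - v⁻¹ • (z * b'))) * a') := by
    simp only [mul_add, add_mul, mul_sub, sub_mul, smul_mul_assoc, mul_smul_comm, smul_smul,
      smul_add, smul_sub, mul_assoc]
    match_scalars <;> field_simp <;> ring
  rw [key, hxxE, haE, hbE]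
  simp

/-- The variable `v`, a transcendental generator of the field `F = ℚ(v)` of rational
functions over `ℚ`. -/
def vv : RatFunc ℚ := RatFunc.X

/-- The `q`-deformed commutator `[x, y]_q = x·y − q·(y·x)`. -/
def qcomm {A : Type*} [Ring A] [Algebra (RatFunc ℚ) A] (q : RatFunc ℚ) (x y : A) : A :=
  x * y - q • (y * x)

/-- The symmetrized Serre-type expression
`𝕊(k₁, k₂ | l) = Sym_{k₁,k₂} (x_{k₁} x_{k₂} y_l − [2] x_{k₁} y_l x_{k₂} + y_l x_{k₁} x_{k₂})`,
where `[2] = v + v⁻¹`. -/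
def Ssym {A : Type*} [Ring A] [Algebra (RatFunc ℚ) A] (x y : ℤ → A) (k₁ k₂ l : ℤ) : A :=
  (x k₁ * x k₂ * y l - (vv + vv⁻¹) • (x k₁ * y l * x k₂) + y l * x k₁ * x k₂) +
    (x k₂ * x k₁ * y l - (vv + vv⁻¹) • (x k₂ * y l * x k₁) + y l * x k₂ * x k₁)

/-- `𝕊(k₁, k₂+1 | l) + 𝕊(k₁+1, k₂ | l) − (v+v⁻¹)·𝕊(k₁+1, k₂+1 | l−1) = 0`. -/
theorem statement15 {A : Type*} [Ring A] [Algebra (RatFunc ℚ) A] (x y : ℤ → A)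
    (hxx : ∀ k l : ℤ,
      qcomm (vv⁻¹ ^ 2) (x k) (x (l + 1)) - (vv⁻¹ ^ 2) • qcomm (vv ^ 2) (x (k + 1)) (x l) = 0)
    (hxy : ∀ k l : ℤ,
      qcomm vv (x k) (y (l + 1)) - vv • qcomm vv⁻¹ (x (k + 1)) (y l) = 0)
    (hyx : ∀ k l : ℤ,
      qcomm vv (y k) (x (l + 1)) - vv • qcomm vv⁻¹ (y (k + 1)) (x l) = 0)
    (k₁ k₂ l : ℤ) :
    Ssym x y k₁ (k₂ + 1) l + Ssym x y (k₁ + 1) k₂ l -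
      (vv + vv⁻¹) • Ssym x y (k₁ + 1) (k₂ + 1) (l - 1) = 0 := by
  have exx := hxx k₁ k₂
  have ea := hxy k₁ (l - 1)
  have eb := hxy k₂ (l - 1)
  rw [sub_add_cancel] at ea eb
  simp only [qcomm] at exx ea eb
  simp only [Ssym]
  exact aux15 vv RatFunc.X_ne_zero (x k₁) (x k₂) (x (k₁ + 1)) (x (k₂ + 1)) (y l) (y (l - 1)) exx ea eb
end
end

section
/- For all k₁, k₂, l ∈ ℤ the following identity holds: 𝕊(k₁, k₂+1 | l) + 𝕊(k₁+1, k₂ | l) − (v + v^{-1}) · 𝕊(k₁, k₂ | l+1) = 0. -/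
noncomputable section

/-- Generic form of Statement 16 over any commutative scalar ring, with `v` an invertible
scalar with inverse `w`.  Here `a0 = x_{k₁}, a1 = x_{k₁+1}, b0 = x_{k₂}, b1 = x_{k₂+1},
c0 = y_l, c1 = y_{l+1}`. -/
theorem statement16_aux {R A : Type*} [CommRing R] [Ring A] [Algebra R A]
    (v w : R) (hvw : v * w = 1) (a0 a1 b0 b1 c0 c1 : A)
    (T1 : (a0 * b1 - (w ^ 2) • (b1 * a0)) - (w ^ 2) • (a1 * b0 - (v ^ 2) • (b0 * a1)) = 0)
    (T2 : (a0 * c1 - v • (c1 * a0)) - v • (a1 * c0 - w • (c0 * a1)) = 0)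
    (T3 : (b0 * c1 - v • (c1 * b0)) - v • (b1 * c0 - w • (c0 * b1)) = 0) :
    ((a0 * b1 * c0 - (v + w) • (a0 * c0 * b1) + c0 * a0 * b1) +
      (b1 * a0 * c0 - (v + w) • (b1 * c0 * a0) + c0 * b1 * a0)) +
    ((a1 * b0 * c0 - (v + w) • (a1 * c0 * b0) + c0 * a1 * b0) +
      (b0 * a1 * c0 - (v + w) • (b0 * c0 * a1) + c0 * b0 * a1)) -
    (v + w) • ((a0 * b0 * c1 - (v + w) • (a0 * c1 * b0) + c1 * a0 * b0) +
      (b0 * a0 * c1 - (v + w) • (b0 * c1 * a0) + c1 * b0 * a0)) = 0 := by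
  have key : ((a0 * b1 * c0 - (v + w) • (a0 * c0 * b1) + c0 * a0 * b1) +
      (b1 * a0 * c0 - (v + w) • (b1 * c0 * a0) + c0 * b1 * a0)) +
    ((a1 * b0 * c0 - (v + w) • (a1 * c0 * b0) + c0 * a1 * b0) +
      (b0 * a1 * c0 - (v + w) • (b0 * c0 * a1) + c0 * b0 * a1)) -
    (v + w) • ((a0 * b0 * c1 - (v + w) • (a0 * c1 * b0) + c1 * a0 * b0) +
      (b0 * a0 * c1 - (v + w) • (b0 * c1 * a0) + c1 * b0 * a0)) =
      c0 * ((a0 * b1 - (w ^ 2) • (b1 * a0)) - (w ^ 2) • (a1 * b0 - (v ^ 2) • (b0 * a1)))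
      - (v ^ 2) • (((a0 * b1 - (w ^ 2) • (b1 * a0))
          - (w ^ 2) • (a1 * b0 - (v ^ 2) • (b0 * a1))) * c0)
      - (v + w) • (b0 * ((a0 * c1 - v • (c1 * a0)) - v • (a1 * c0 - w • (c0 * a1))))
      + (1 + w ^ 2) • (((a0 * c1 - v • (c1 * a0)) - v • (a1 * c0 - w • (c0 * a1))) * b0)
      - (v + w) • (a0 * ((b0 * c1 - v • (c1 * b0)) - v • (b1 * c0 - w • (c0 * b1))))
      + (1 + w ^ 2) • (((b0 * c1 - v • (c1 * b0)) - v • (b1 * c0 - w • (c0 * b1))) * a0)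
      + (v * w - 1) • (-(a0 * b1 * c0) + (v + w) • (a0 * c0 * b1)
          - (v * w + 1) • (b1 * a0 * c0) + w • (b1 * c0 * a0) - (w ^ 2 + 1) • (c0 * b1 * a0)
          - (v * w + 1) • (a1 * b0 * c0) + w • (a1 * c0 * b0) - (w ^ 2 + 1) • (c0 * a1 * b0)
          + (v ^ 3 * w + v ^ 2 - 1) • (b0 * a1 * c0) + (v + w) • (b0 * c0 * a1)
          - (v * w + 1) • (c0 * b0 * a1)
          + a0 * c1 * b0 + w • (c1 * a0 * b0) + b0 * c1 * a0 + w • (c1 * b0 * a0)) := by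
    simp only [mul_sub, sub_mul, mul_add, add_mul, neg_mul, mul_neg, smul_sub, smul_add,
      smul_neg, mul_smul_comm, smul_mul_assoc, smul_smul, mul_assoc]
    match_scalars <;> ring
  rw [key, T1, T2, T3, hvw, sub_self, zero_smul, add_zero]
  simp

/-- `𝕊(k₁, k₂+1 | l) + 𝕊(k₁+1, k₂ | l) − (v+v⁻¹)·𝕊(k₁, k₂ | l+1) = 0`. -/
theorem statement16 {A : Type*} [Ring A] [Algebra (RatFunc ℚ) A] (x y : ℤ → A)
    (hxx : ∀ k l : ℤ,
      qcomm (vv⁻¹ ^ 2) (x k) (x (l + 1)) - (vv⁻¹ ^ 2) • qcomm (vv ^ 2) (x (k + 1)) (x l) = 0)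
    (hxy : ∀ k l : ℤ,
      qcomm vv (x k) (y (l + 1)) - vv • qcomm vv⁻¹ (x (k + 1)) (y l) = 0)
    (hyx : ∀ k l : ℤ,
      qcomm vv (y k) (x (l + 1)) - vv • qcomm vv⁻¹ (y (k + 1)) (x l) = 0)
    (k₁ k₂ l : ℤ) :
    Ssym x y k₁ (k₂ + 1) l + Ssym x y (k₁ + 1) k₂ l -
      (vv + vv⁻¹) • Ssym x y k₁ k₂ (l + 1) = 0 := by
  have hvw : vv * vv⁻¹ = 1 := mul_inv_cancel₀ RatFunc.X_ne_zero
  have T1 := hxx k₁ k₂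
  have T2 := hxy k₁ l
  have T3 := hxy k₂ l
  simp only [qcomm] at T1 T2 T3
  have := statement16_aux vv vv⁻¹ hvw (x k₁) (x (k₁ + 1)) (x k₂) (x (k₂ + 1)) (y l) (y (l + 1))
    T1 T2 T3
  simpa [Ssym] using this
end
end
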